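/- Let d ≥ 1 and let τ_{01}, τ_{12} denote the transpositions of Fin 3 swapping 0,1 and 1,2 respectively. Then there exist complex numbers α, β and α', β' such that: (i) the diagonal matrix O_A indexed by a : Fin 3 → Fin d with diagonal entry α·[a0 = a1] + β satisfies Tr[O_A · W_π] = Tr[W_{τ_{01}} · W_π] for every permutation π of Fin 3; and (ii) the diagonal matrix O_B with diagonal entry α'·[a1 = a2] + β' satisfies Tr[O_B · W_π] = Tr[W_{τ_{12}} · W_π] for every permutation π of Fin 3. (This is the trace-matching content of the paper's Proposition 4: a product-type computational-basis post-processing reproduces the pair of distinct swap operators under bi-local twirling.) -/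

import Mathlib

open Matrix

noncomputable section

/-- Permutation operator `W_π` of local index `I`: `W_π[b,a] = 1` iff `b = a ∘ π`. -/
def permOp (I : Type*) [DecidableEq I] {t : ℕ} (π : Equiv.Perm (Fin t)) :
    Matrix (Fin t → I) (Fin t → I) ℂ :=
  Matrix.of fun b a => if b = a ∘ ⇑π then 1 else 0

lemma perms3 : ∀ π : Equiv.Perm (Fin 3),
    π = 1 ∨ π = Equiv.swap 0 1 ∨ π = Equiv.swap 1 2 ∨ π = Equiv.swap 0 2 ∨
    π = Equiv.swap 0 1 * Equiv.swap 1 2 ∨ π = Equiv.swap 1 2 * Equiv.swap 0 1 := by decide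

lemma c1 : ⇑(1 : Equiv.Perm (Fin 3)) = ![0,1,2] := by decide
lemma c01 : ⇑(Equiv.swap (0:Fin 3) 1) = ![1,0,2] := by decide
lemma c12 : ⇑(Equiv.swap (1:Fin 3) 2) = ![0,2,1] := by decide
lemma c02 : ⇑(Equiv.swap (0:Fin 3) 2) = ![2,1,0] := by decide
lemma cA : ⇑((Equiv.swap 0 1 * Equiv.swap 1 2 : Equiv.Perm (Fin 3))) = ![1,2,0] := by decide
lemma cB : ⇑((Equiv.swap 1 2 * Equiv.swap 0 1 : Equiv.Perm (Fin 3))) = ![2,0,1] := by decide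

lemma trace_mul_permOp (d : ℕ) (M : Matrix (Fin 3 → Fin d) (Fin 3 → Fin d) ℂ)
    (π : Equiv.Perm (Fin 3)) :
    (M * permOp (Fin d) π).trace = ∑ a : Fin 3 → Fin d, M a (a ∘ ⇑π) := by
  simp [Matrix.trace, Matrix.mul_apply, permOp, Matrix.diag]

def tripleEquiv (d : ℕ) : (Fin d × Fin d × Fin d) ≃ (Fin 3 → Fin d) where
  toFun p := ![p.1, p.2.1, p.2.2]
  invFun a := (a 0, a 1, a 2)
  left_inv p := rfl
  right_inv a := by funext i; fin_cases i <;> rfl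

lemma sum_triple (d : ℕ) (f : (Fin 3 → Fin d) → ℂ) :
    ∑ a : Fin 3 → Fin d, f a = ∑ x : Fin d, ∑ y : Fin d, ∑ z : Fin d, f ![x, y, z] := by
  rw [← Equiv.sum_comp (tripleEquiv d) f]
  simp [tripleEquiv, Fintype.sum_prod_type]
  rfl

lemma eq_iff3 (d : ℕ) (a g : Fin 3 → Fin d) : a = g ↔ (a 0 = g 0 ∧ a 1 = g 1 ∧ a 2 = g 2) := by
  constructor
  · rintro rfl; exact ⟨rfl, rfl, rfl⟩
  · rintro ⟨h0, h1, h2⟩; funext i; fin_cases i <;> assumption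

lemma v0 {α : Type*} (x y z : α) : ![x,y,z] 0 = x := by simp
lemma v1 {α : Type*} (x y z : α) : ![x,y,z] 1 = y := by simp
lemma v2 {α : Type*} (x y z : α) : ![x,y,z] 2 = z := by simp

set_option maxHeartbeats 1000000 in
theorem stmt_15 (d : ℕ) (hd : 1 ≤ d) :
    ∃ α β α' β' : ℂ,
      (∀ π : Equiv.Perm (Fin 3),
        ((Matrix.diagonal fun a : Fin 3 → Fin d =>
            α * (if a 0 = a 1 then 1 else 0) + β) * permOp (Fin d) π).trace =
          (permOp (Fin d) (Equiv.swap (0 : Fin 3) 1) * permOp (Fin d) π).trace) ∧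
      (∀ π : Equiv.Perm (Fin 3),
        ((Matrix.diagonal fun a : Fin 3 → Fin d =>
            α' * (if a 1 = a 2 then 1 else 0) + β') * permOp (Fin d) π).trace =
          (permOp (Fin d) (Equiv.swap (1 : Fin 3) 2) * permOp (Fin d) π).trace) := by
  refine ⟨(d:ℂ)+1, -1, (d:ℂ)+1, -1, ?_, ?_⟩ <;>
  · intro π
    rcases perms3 π with rfl | rfl | rfl | rfl | rfl | rfl <;>
    · rw [trace_mul_permOp, trace_mul_permOp]
      simp only [permOp, Matrix.of_apply, Matrix.diagonal_apply, eq_iff3,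
        c1, c01, c12, c02, cA, cB]
      rw [sum_triple, sum_triple]
      simp only [Function.comp_apply, v0, v1, v2]
      simp [ite_and, Finset.sum_ite_eq, Finset.sum_ite_eq', eq_comm,
        Finset.sum_add_distrib, mul_ite]
      try push_cast
      try ring
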